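/- Let d ≥ 1 and let L = {L_i}_{i=1}^{d²} be a measure basis for d×d complex matrices with all weights l_i = tr L_i strictly positive, Gram matrix G, bias matrix A = diag(l_i), Born matrix Φ = AG^{-1}, and √Φ := A^{1/2}(A^{1/2}G^{-1}A^{1/2})^{1/2}A^{-1/2}. For nonzero real t, let L^t be the collinear measure basis L^t_i := t·L_i + (1−t)·(l_i/d)·I, with Born matrix Φ^t and square root √(Φ^t) defined analogously from its Gram matrix and bias matrix. Let J be the d²×d² all-ones matrix. Then Φ^t = (1/t²)Φ + (1 − 1/t²)·(1/d)·AJ and √(Φ^t) = (1/|t|)√Φ + (1 − 1/|t|)·(1/d)·AJ. -/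

import Mathlib

open Matrix BigOperators
open scoped ComplexOrder Kronecker

/-- A measure basis: a linearly independent family of `d²` Hermitian `d×d` complex
matrices summing to the identity, with nonnegative traces. -/
def IsMeasureBasis {d : ℕ} (L : Fin (d ^ 2) → Matrix (Fin d) (Fin d) ℂ) : Prop :=
  (∀ i, (L i).IsHermitian) ∧ LinearIndependent ℝ L ∧ (∑ i, L i) = 1 ∧ ∀ i, 0 ≤ ((L i).trace).re

/-- A Wigner basis: an orthogonal measure basis. -/
def IsWignerBasis {d : ℕ} (L : Fin (d ^ 2) → Matrix (Fin d) (Fin d) ℂ) : Prop :=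
  IsMeasureBasis L ∧ ∀ i j, i ≠ j → (L i * L j).trace = 0

/-- The rescaled frame operator `S_L(X) = ∑ⱼ (tr(X Lⱼ)/lⱼ) Lⱼ`. -/
noncomputable def rsFrameOp {n : Type*} [Fintype n] {m : Type*} [Fintype m] [DecidableEq m]
    (L : n → Matrix m m ℂ) (X : Matrix m m ℂ) : Matrix m m ℂ :=
  ∑ j, (((X * L j).trace) / ((L j).trace)) • L j

/-- A map on matrices that is ℝ-linear, Hermiticity-preserving, self-adjoint with respect to
the Hilbert–Schmidt inner product on Hermitian matrices, and positive. -/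
def IsPosSelfAdjMap {m : Type*} [Fintype m]
    (T : Matrix m m ℂ → Matrix m m ℂ) : Prop :=
  IsLinearMap ℝ T ∧ (∀ X, X.IsHermitian → (T X).IsHermitian) ∧
  (∀ X Y, X.IsHermitian → Y.IsHermitian → (T X * Y).trace = (X * T Y).trace) ∧
  (∀ X, X.IsHermitian → 0 ≤ ((X * T X).trace).re)

/-- `T` is the (unique) positive self-adjoint inverse square root of the rescaled frame
operator of `L`, i.e. `S_L ∘ T ∘ T = id` on Hermitian matrices; `PW(L) i = T (L i)`. -/
def IsInvSqrtOfFrameOp {n : Type*} [Fintype n] {m : Type*} [Fintype m] [DecidableEq m]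
    (L : n → Matrix m m ℂ) (T : Matrix m m ℂ → Matrix m m ℂ) : Prop :=
  IsPosSelfAdjMap T ∧ ∀ X : Matrix m m ℂ, X.IsHermitian → rsFrameOp L (T (T X)) = X

namespace CollinearAux
open Matrix

variable {n : Type*} [Fintype n]

lemma posSemidef_smul {A : Matrix n n ℝ} (hA : A.PosSemidef)
    {c : ℝ} (hc : 0 ≤ c) : (c • A).PosSemidef := by
  refine ⟨?_, fun x => ?_⟩
  · unfold Matrix.IsHermitian
    rw [conjTranspose_smul, hA.1]
    simp
  · exact (hA.smul hc).2 x

lemma transpose_of_psd {B : Matrix n n ℝ} (hB : B.PosSemidef) : Bᵀ = B := by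
  ext i j
  have := congrFun (congrFun hB.1 i) j
  simpa [Matrix.conjTranspose_apply] using this

open scoped MatrixOrder in
lemma eq_of_sq_eq_sq' [DecidableEq n] {A B : Matrix n n ℝ}
    (hA : A.PosSemidef) (hB : B.PosSemidef) (h : A ^ 2 = B ^ 2) : A = B :=
  (CFC.sq_eq_sq_iff A B hA.nonneg hB.nonneg).mp h

end CollinearAux

/-- for the collinear measure basis `Lᵗ`, the Born matrix and its positive
square root satisfy `Φᵗ = (1/t²)Φ + (1 − 1/t²)(1/d)AJ` and
`√(Φᵗ) = (1/|t|)√Φ + (1 − 1/|t|)(1/d)AJ`. -/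
theorem collinear_born_matrix {d : ℕ} [NeZero d]
    (L : Fin (d ^ 2) → Matrix (Fin d) (Fin d) ℂ)
    (hL : IsMeasureBasis L) (hpos : ∀ i, 0 < ((L i).trace).re)
    (t : ℝ) (ht : t ≠ 0)
    (Lt : Fin (d ^ 2) → Matrix (Fin d) (Fin d) ℂ)
    (hLt : ∀ i, Lt i = t • L i +
      (((1 - t) * ((L i).trace).re / (d : ℝ)) • (1 : Matrix (Fin d) (Fin d) ℂ)))
    (G Gt A Asq AsqInv B Bt J : Matrix (Fin (d ^ 2)) (Fin (d ^ 2)) ℝ)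
    (hG : ∀ i j, G i j = ((L i * L j).trace).re)
    (hGt : ∀ i j, Gt i j = ((Lt i * Lt j).trace).re)
    (hA : A = Matrix.diagonal fun i => ((L i).trace).re)
    (hAsq : Asq = Matrix.diagonal fun i => Real.sqrt (((L i).trace).re))
    (hAsqInv : AsqInv = Matrix.diagonal fun i => (Real.sqrt (((L i).trace).re))⁻¹)
    (hBpsd : B.PosSemidef) (hBsq : B * B = Asq * G⁻¹ * Asq)
    (hBtpsd : Bt.PosSemidef) (hBtsq : Bt * Bt = Asq * Gt⁻¹ * Asq)
    (hJ : J = Matrix.of fun _ _ => (1 : ℝ)) :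
    A * Gt⁻¹ = (1 / t ^ 2) • (A * G⁻¹) + ((1 - 1 / t ^ 2) * (d : ℝ)⁻¹) • (A * J) ∧
    Asq * Bt * AsqInv =
      (1 / |t|) • (Asq * B * AsqInv) + ((1 - 1 / |t|) * (d : ℝ)⁻¹) • (A * J) := by
  obtain ⟨hherm, hlin, hsum1, -⟩ := hL
  have hdpos : 0 < (d : ℝ) := Nat.cast_pos.mpr (Nat.pos_of_ne_zero (NeZero.ne d))
  have hd0 : (d : ℝ) ≠ 0 := hdpos.ne'
  set l : Fin (d ^ 2) → ℝ := fun i => ((L i).trace).re with hldef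
  have hl : ∀ i, 0 < l i := hpos
  -- traces are real
  have htr : ∀ i, (L i).trace = ((l i : ℝ) : ℂ) := by
    intro i
    have h1 : star (L i).trace = (L i).trace := by
      rw [← Matrix.trace_conjTranspose, (hherm i)]
    exact (Complex.conj_eq_iff_re.mp h1).symm
  have htrLL : ∀ i j, ((L i * L j).trace : ℂ) = ((G i j : ℝ) : ℂ) := by
    intro i j
    have h1 : star ((L i * L j).trace) = ((L i * L j)).trace := by
      rw [← Matrix.trace_conjTranspose, Matrix.conjTranspose_mul, (hherm i), (hherm j),
        Matrix.trace_mul_comm]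
    rw [hG]
    exact (Complex.conj_eq_iff_re.mp h1).symm
  have hGsymm : ∀ i j, G i j = G j i := by
    intro i j
    rw [hG, hG, Matrix.trace_mul_comm]
  -- sum of weights is d
  have hsuml : ∑ i, l i = (d : ℝ) := by
    have h1 : (∑ i, L i).trace = (1 : Matrix (Fin d) (Fin d) ℂ).trace := by rw [hsum1]
    rw [Matrix.trace_sum, Matrix.trace_one] at h1
    have h2 := congrArg Complex.re h1
    simpa [Complex.re_sum] using h2
  -- row sums of G
  have hrow : ∀ i, ∑ k, G i k = l i := by
    intro i
    have h1 : ∑ k, ((L i * L k).trace) = (L i).trace := by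
      rw [← Matrix.trace_sum, ← Finset.mul_sum, hsum1, mul_one]
    have h2 := congrArg Complex.re h1
    simp only [Complex.re_sum] at h2
    simpa [hG] using h2
  -- basic identities involving J
  have hGJ : G * J = A * J := by
    ext i j
    simp [hJ, hA, Matrix.mul_apply, Matrix.diagonal_apply, hrow i, Finset.sum_ite_eq]
  have hJG : J * G = J * A := by
    ext i j
    have hcol : ∑ k, G k j = l j := by
      rw [← hrow j]; exact Finset.sum_congr rfl fun k _ => hGsymm k j
    simp [hJ, hA, Matrix.mul_apply, Matrix.diagonal_apply, hcol, Finset.sum_ite_eq]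
  have hJAJ : J * A * J = (d : ℝ) • J := by
    ext i j
    simp [hJ, hA, Matrix.mul_apply, Matrix.diagonal_apply, Finset.sum_ite_eq, hsuml]
  have hJsymm : Jᵀ = J := by
    ext i j
    simp [hJ]
  -- G is positive definite, hence invertible
  have hGpd : G.PosDef := by
    refine Matrix.posDef_iff_dotProduct_mulVec.mpr ⟨?_, ?_⟩
    · ext i j
      simp only [Matrix.conjTranspose_apply, star_trivial]
      exact hGsymm j i
    · intro x hx
      have star_x : star x = x := by simp
      rw [star_x]
      set M : Matrix (Fin d) (Fin d) ℂ := ∑ i, x i • L i with hM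
      have hMh : Mᴴ = M := by
        rw [hM, Matrix.conjTranspose_sum]
        exact Finset.sum_congr rfl fun i _ => by
          rw [Matrix.conjTranspose_smul, star_trivial, (hherm i)]
      have h1 : (Mᴴ * M).trace = ((∑ p, ∑ q, Complex.normSq (M q p) : ℝ) : ℂ) := by
        simp only [Matrix.trace, Matrix.diag, Matrix.mul_apply, Matrix.conjTranspose_apply]
        push_cast
        refine Finset.sum_congr rfl fun p _ => Finset.sum_congr rfl fun q _ => ?_
        rw [Complex.star_def, Complex.normSq_eq_conj_mul_self]
      have h2 : x ⬝ᵥ G *ᵥ x = ((M * M).trace).re := by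
        have expand : M * M = ∑ i, ∑ j, (x i * x j) • (L i * L j) := by
          rw [hM, Finset.sum_mul_sum]
          refine Finset.sum_congr rfl fun i _ => Finset.sum_congr rfl fun j _ => ?_
          rw [smul_mul_assoc, mul_smul_comm, smul_smul]
        rw [expand]
        simp only [Matrix.trace_sum, Matrix.trace_smul, Complex.re_sum, Complex.smul_re,
          smul_eq_mul]
        simp only [dotProduct, Matrix.mulVec, dotProduct, hG]
        refine Finset.sum_congr rfl fun i _ => ?_
        rw [Finset.mul_sum]
        refine Finset.sum_congr rfl fun j _ => by ring
      have hM0 : M ≠ 0 := by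
        intro h0
        apply hx
        funext i
        exact Fintype.linearIndependent_iff.mp hlin x (by rw [← hM, h0]) i
      obtain ⟨p, q, hpq⟩ : ∃ p q, M p q ≠ 0 := by
        by_contra h
        push_neg at h
        exact hM0 (by ext p q; exact h p q)
      have hqpos : 0 < ∑ p, ∑ q, Complex.normSq (M q p) := by
        refine Finset.sum_pos' (fun a _ => Finset.sum_nonneg fun b _ => Complex.normSq_nonneg _) ?_
        refine ⟨q, Finset.mem_univ q, Finset.sum_pos' (fun b _ => Complex.normSq_nonneg _)
          ⟨p, Finset.mem_univ p, Complex.normSq_pos.mpr hpq⟩⟩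
      rw [hMh] at h1
      rw [h2, h1]
      simpa using hqpos
  have hGdet : IsUnit G.det := isUnit_iff_ne_zero.mpr hGpd.det_pos.ne'
  have hGG : G * G⁻¹ = 1 := Matrix.mul_nonsing_inv G hGdet
  have hGinvG : G⁻¹ * G = 1 := Matrix.nonsing_inv_mul G hGdet
  -- the Gram matrix of the collinear basis
  have hGt2 : Gt = (t ^ 2) • G + ((1 - t ^ 2) / (d : ℝ)) • (A * J * A) := by
    ext i j
    have hAJA : (A * J * A) i j = l i * l j := by
      simp [hA, hJ, Matrix.mul_apply, Matrix.diagonal_apply, Finset.sum_ite_eq]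
    have htrace : (Lt i * Lt j).trace =
        (((t ^ 2 * G i j + (1 - t ^ 2) / (d : ℝ) * (l i * l j) : ℝ)) : ℂ) := by
      rw [hLt i, hLt j]
      simp only [add_mul, mul_add, smul_mul_assoc, mul_smul_comm, smul_smul, mul_one, one_mul,
        Matrix.trace_add, Matrix.trace_smul, htrLL, htr, Matrix.trace_one, Fintype.card_fin,
        Complex.real_smul, Complex.ofReal_re]
      push_cast
      field_simp
      ring
    rw [hGt, htrace, Complex.ofReal_re, Matrix.add_apply, Matrix.smul_apply, Matrix.smul_apply,
      hAJA, smul_eq_mul, smul_eq_mul]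
  -- the explicit inverse of Gt
  have hMinv : Gt * ((1 / t ^ 2) • G⁻¹ + ((1 - 1 / t ^ 2) * (d : ℝ)⁻¹) • J) = 1 := by
    have h1 : A * J * A = A * J * G := by
      rw [Matrix.mul_assoc, ← hJG, ← Matrix.mul_assoc]
    have hAJAGinv : A * J * A * G⁻¹ = A * J := by
      rw [h1, Matrix.mul_assoc, hGG, Matrix.mul_one]
    have hJAJ' : J * (A * J) = (d : ℝ) • J := by rw [← Matrix.mul_assoc]; exact hJAJ
    have hAJAJ : A * J * A * J = (d : ℝ) • (A * J) := by
      simp only [Matrix.mul_assoc]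
      rw [hJAJ', Matrix.mul_smul]
    rw [hGt2, Matrix.add_mul, Matrix.mul_add, Matrix.mul_add]
    simp only [Matrix.smul_mul, Matrix.mul_smul, smul_smul, hGG, hGJ, hAJAGinv, hAJAJ]
    have e1 : 1 / t ^ 2 * t ^ 2 = 1 := by field_simp
    have e2 : (1 - 1 / t ^ 2) * (d : ℝ)⁻¹ * t ^ 2 +
        (1 / t ^ 2 * ((1 - t ^ 2) / (d : ℝ)) +
          (1 - 1 / t ^ 2) * (d : ℝ)⁻¹ * ((1 - t ^ 2) / (d : ℝ) * (d : ℝ))) = 0 := by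
      field_simp
      ring
    rw [e1, ← add_smul, add_assoc, ← add_smul, e2, one_smul, zero_smul, add_zero]
  have hGtinv : Gt⁻¹ = (1 / t ^ 2) • G⁻¹ + ((1 - 1 / t ^ 2) * (d : ℝ)⁻¹) • J :=
    Matrix.inv_eq_right_inv hMinv
  constructor
  · rw [hGtinv, Matrix.mul_add, Matrix.mul_smul, Matrix.mul_smul]
  -- second part
  · have hGinvAJ : G⁻¹ * (A * J) = J := by
      rw [← hGJ, ← Matrix.mul_assoc, hGinvG, Matrix.one_mul]
    rw [hGtinv] at hBtsq
    simp only [Matrix.mul_add, Matrix.add_mul, Matrix.mul_smul, Matrix.smul_mul] at hBtsq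
    have hsqrt_pos : ∀ i, 0 < Real.sqrt (l i) := fun i => Real.sqrt_pos.mpr (hl i)
    have hAsqA : Asq * Asq = A := by
      rw [hAsq, hA, Matrix.diagonal_mul_diagonal]
      exact congrArg Matrix.diagonal (funext fun i => Real.mul_self_sqrt (hl i).le)
    have hAsqInv1 : Asq * AsqInv = 1 := by
      rw [hAsq, hAsqInv, Matrix.diagonal_mul_diagonal]
      rw [show ((fun i => Real.sqrt (l i) * (Real.sqrt (l i))⁻¹) = fun _ => (1 : ℝ)) from
        funext fun i => mul_inv_cancel₀ (hsqrt_pos i).ne']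
      exact Matrix.diagonal_one
    have hAsqsymm : Asqᵀ = Asq := by rw [hAsq]; exact Matrix.diagonal_transpose _
    set K : Matrix (Fin (d ^ 2)) (Fin (d ^ 2)) ℝ := Asq * J * Asq with hK
    have hKsymm : Kᵀ = K := by
      rw [hK, Matrix.transpose_mul, Matrix.transpose_mul, hAsqsymm, hJsymm, Matrix.mul_assoc]
    have hB2K : B * B * K = K := by
      rw [hBsq, hK]
      simp only [← Matrix.mul_assoc]
      rw [Matrix.mul_assoc (Asq * G⁻¹) Asq Asq, hAsqA,
        Matrix.mul_assoc (Asq * G⁻¹) A J, Matrix.mul_assoc Asq G⁻¹ (A * J), hGinvAJ]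
    have hB1pd : (B + 1).PosDef := Matrix.PosDef.posSemidef_add hBpsd Matrix.PosDef.one
    have hB1det : IsUnit (B + 1).det := isUnit_iff_ne_zero.mpr hB1pd.det_pos.ne'
    have hBK : B * K = K := by
      have h : (B + 1) * (B * K) = (B + 1) * K := by
        rw [Matrix.add_mul, Matrix.add_mul, ← Matrix.mul_assoc, hB2K, Matrix.one_mul,
          Matrix.one_mul, add_comm]
      have := congrArg (fun X => (B + 1)⁻¹ * X) h
      simpa [← Matrix.mul_assoc, Matrix.nonsing_inv_mul _ hB1det] using this
    have hBsymm : Bᵀ = B := CollinearAux.transpose_of_psd hBpsd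
    have hKB : K * B = K := by
      have := congrArg Matrix.transpose hBK
      rwa [Matrix.transpose_mul, hKsymm, hBsymm] at this
    have hJAJ' : J * (A * J) = (d : ℝ) • J := by rw [← Matrix.mul_assoc]; exact hJAJ
    have hKK : K * K = (d : ℝ) • K := by
      rw [hK]
      simp only [← Matrix.mul_assoc]
      rw [Matrix.mul_assoc (Asq * J) Asq Asq, hAsqA, Matrix.mul_assoc (Asq * J) A J,
        Matrix.mul_assoc Asq J (A * J), hJAJ', Matrix.mul_smul, Matrix.smul_mul]
    set s : ℝ := |t|⁻¹ with hs
    have hspos : 0 < s := inv_pos.mpr (abs_pos.mpr ht)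
    have hs2 : s * s = 1 / t ^ 2 := by
      rw [hs, ← mul_inv, abs_mul_abs_self, ← sq, one_div]
    set C : Matrix (Fin (d ^ 2)) (Fin (d ^ 2)) ℝ :=
      s • B + ((1 - s) * (d : ℝ)⁻¹) • K with hC
    have hC2 : C * C = Bt * Bt := by
      rw [hC, hBtsq]
      rw [Matrix.add_mul, Matrix.mul_add, Matrix.mul_add]
      simp only [Matrix.smul_mul, Matrix.mul_smul, smul_smul, hBK, hKB, hKK]
      rw [← hBsq]
      have c1 : s * s = 1 / t ^ 2 := hs2
      have c2 : (1 - s) * (d : ℝ)⁻¹ * s + (s * ((1 - s) * (d : ℝ)⁻¹) +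
          (1 - s) * (d : ℝ)⁻¹ * ((1 - s) * (d : ℝ)⁻¹ * (d : ℝ)))
          = (1 - 1 / t ^ 2) * (d : ℝ)⁻¹ := by
        rw [← hs2]
        field_simp
        ring
      rw [add_assoc, ← add_smul, ← add_smul, c1, c2]
    set P : Matrix (Fin (d ^ 2)) (Fin (d ^ 2)) ℝ := (d : ℝ)⁻¹ • K with hP
    have hKpsd : K.PosSemidef := by
      have hKeq : K = (Matrix.of fun (_ : Fin 1) j => Real.sqrt (l j))ᴴ *
          (Matrix.of fun (_ : Fin 1) j => Real.sqrt (l j)) := by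
        ext i j
        simp [hK, hAsq, hJ, Matrix.mul_apply, Matrix.diagonal_apply, Finset.sum_ite_eq,
          Matrix.conjTranspose_apply]
        rfl
      rw [hKeq]
      exact Matrix.posSemidef_conjTranspose_mul_self _
    have hPpsd : P.PosSemidef := CollinearAux.posSemidef_smul hKpsd (inv_nonneg.mpr hdpos.le)
    have hPP : P * P = P := by
      rw [hP, Matrix.smul_mul, Matrix.mul_smul, hKK, smul_smul, smul_smul]
      congr 1
      field_simp
    have hBP : B * P = P := by rw [hP, Matrix.mul_smul, hBK]
    have hPB : P * B = P := by rw [hP, Matrix.smul_mul, hKB]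
    have hKsymm' : Kᴴ = K := by
      ext i j
      have := congrFun (congrFun hKsymm i) j
      simpa using this
    have hPsymm : Pᴴ = P := by
      rw [hP, Matrix.conjTranspose_smul, star_trivial, hKsymm']
    have hBPpsd : (B - P).PosSemidef := by
      have h1 : (1 - P)ᴴ = 1 - P := by
        rw [Matrix.conjTranspose_sub, Matrix.conjTranspose_one, hPsymm]
      have key : (1 - P)ᴴ * B * (1 - P) = B - P := by
        rw [h1, Matrix.sub_mul, Matrix.one_mul, hPB, Matrix.sub_mul, Matrix.mul_sub,
          Matrix.mul_sub, Matrix.mul_one, Matrix.mul_one, hBP, hPP]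
        abel
      exact key ▸ hBpsd.conjTranspose_mul_mul_same (1 - P)
    have hCP : C = s • (B - P) + P := by
      rw [hC, hP, smul_sub, smul_smul]
      module
    have hCpsd : C.PosSemidef :=
      hCP ▸ (CollinearAux.posSemidef_smul hBPpsd hspos.le).add hPpsd
    have hBtC : Bt = C := CollinearAux.eq_of_sq_eq_sq' hBtpsd hCpsd (by rw [pow_two Bt, pow_two C]; exact hC2.symm)
    have hAKA : Asq * K * AsqInv = A * J := by
      rw [hK]
      simp only [← Matrix.mul_assoc]
      rw [hAsqA, Matrix.mul_assoc (A * J) Asq AsqInv, hAsqInv1, Matrix.mul_one]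
    rw [hBtC, hC]
    simp only [Matrix.mul_add, Matrix.add_mul, Matrix.mul_smul, Matrix.smul_mul]
    rw [hAKA, one_div, ← hs]
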